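/- Define operators D_x and D_y on bivariate formal power series over ℚ by: the (r,s)-coefficient of D_x f is r times the (r,s)-coefficient of f, and the (r,s)-coefficient of D_y f is s times the (r,s)-coefficient of f. Then, with Z = T_x + T_y and W = T_x·T_y, the following identities hold: (1-T_y)·(D_x Z) + (1-T_x)·(D_y Z) = Z, and (1-T_y)·(D_x W) + (1-T_x)·(D_y W) = 2W. -/

import Mathlib

open Finset

/-- Number of simple connected bipartite graphs on the labeled vertex set
`Fin r ⊕ Fin s`, with all edges joining the two parts and exactly
`r + s - 1 + k` edges (so `k` is the Betti number). -/
noncomputable def Nbi (r s k : ℕ) : ℕ :=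
  Nat.card {G : SimpleGraph (Fin r ⊕ Fin s) //
    G.Connected ∧
    (∀ a b, ¬ G.Adj (Sum.inl a) (Sum.inl b)) ∧
    (∀ a b, ¬ G.Adj (Sum.inr a) (Sum.inr b)) ∧
    Nat.card G.edgeSet = r + s - 1 + k}

/-- `F_k(x,y) = ∑ N_bi(r,s,k) x^r y^s / (r! s!)`. -/
noncomputable def Fk (k : ℕ) : MvPowerSeries (Fin 2) ℚ :=
  fun m => (Nbi (m 0) (m 1) k : ℚ) / ((m 0).factorial * (m 1).factorial)

/-- `T_x = x ∂T/∂x`, coefficientwise `r · N_bi(r,s,0)/(r! s!)`. -/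
noncomputable def Tx : MvPowerSeries (Fin 2) ℚ :=
  fun m => (m 0 : ℚ) * (Nbi (m 0) (m 1) 0 : ℚ) / ((m 0).factorial * (m 1).factorial)

/-- `T_y = y ∂T/∂y`, coefficientwise `s · N_bi(r,s,0)/(r! s!)`. -/
noncomputable def Ty : MvPowerSeries (Fin 2) ℚ :=
  fun m => (m 1 : ℚ) * (Nbi (m 0) (m 1) 0 : ℚ) / ((m 0).factorial * (m 1).factorial)

noncomputable def Zs : MvPowerSeries (Fin 2) ℚ := Tx + Ty

noncomputable def Ws : MvPowerSeries (Fin 2) ℚ := Tx * Ty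

/-- The Euler operator `D_x = x ∂/∂x` acting coefficientwise. -/
noncomputable def Dx (f : MvPowerSeries (Fin 2) ℚ) : MvPowerSeries (Fin 2) ℚ :=
  fun m => (m 0 : ℚ) * MvPowerSeries.coeff m f

/-- The Euler operator `D_y = y ∂/∂y` acting coefficientwise. -/
noncomputable def Dy (f : MvPowerSeries (Fin 2) ℚ) : MvPowerSeries (Fin 2) ℚ :=
  fun m => (m 1 : ℚ) * MvPowerSeries.coeff m f


open SimpleGraph


variable {V : Type*}

/-- In a connected finite graph, `#V ≤ #E + 1`. -/
lemma connected_card_le [Fintype V] (G : SimpleGraph V) (hG : G.Connected) :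
    Fintype.card V ≤ Nat.card G.edgeSet + 1 := by
  classical
  obtain ⟨u0⟩ := hG.nonempty
  -- for each v ≠ u0, a neighbor strictly closer to u0
  have hstep : ∀ v : V, v ≠ u0 → ∃ w, G.Adj v w ∧ G.dist w u0 + 1 = G.dist v u0 := by
    intro v hv
    have hreach : G.Reachable v u0 := hG.preconnected v u0
    obtain ⟨p, hp⟩ := hreach.exists_walk_length_eq_dist
    cases p with
    | nil => exact absurd rfl hv
    | @cons _ w' _ h q =>
      refine ⟨w', h, ?_⟩
      have h1 : G.dist w' u0 ≤ q.length := SimpleGraph.dist_le q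
      have h2 : G.dist v u0 ≤ G.dist w' u0 + 1 := by
        obtain ⟨q', hq'⟩ := (q.reachable).exists_walk_length_eq_dist
        calc G.dist v u0 ≤ (SimpleGraph.Walk.cons h q').length := SimpleGraph.dist_le _
          _ = q'.length + 1 := by simp [SimpleGraph.Walk.length_cons]
          _ = G.dist w' u0 + 1 := by rw [hq']
      simp only [SimpleGraph.Walk.length_cons] at hp
      omega
  choose w hw hd using hstep
  have hinj : Function.Injective
      (fun v : {v : V // v ≠ u0} => (⟨s(v.1, w v.1 v.2), (hw v.1 v.2)⟩ : G.edgeSet)) := by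
    rintro ⟨v, hv⟩ ⟨v', hv'⟩ h
    have h' : s(v, w v hv) = s(v', w v' hv') := congrArg Subtype.val h
    simp only [Subtype.mk.injEq, Sym2.eq, Sym2.rel_iff', Prod.mk.injEq, Prod.swap_prod_mk] at h
    rcases Sym2.eq_iff.mp h' with ⟨h1, h2⟩ | ⟨h1, h2⟩
    · exact Subtype.ext h1
    · exfalso
      have d1 := hd v hv
      have d2 := hd v' hv'
      rw [← h1] at d2
      rw [h2] at d1
      omega
  have hcard : Nat.card {v : V // v ≠ u0} ≤ Nat.card ↑G.edgeSet :=
    Nat.card_le_card_of_injective _ hinj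
  have h1 : Nat.card {v : V // v ≠ u0} = Fintype.card V - 1 := by
    rw [Nat.card_eq_fintype_card, Fintype.card_subtype_compl, Fintype.card_subtype_eq]
  have h2 : 1 ≤ Fintype.card V := Fintype.card_pos_iff.mpr ⟨u0⟩
  omega

/-- Reachability stays in an adjacency-closed set. -/
lemma reach_closed {G : SimpleGraph V} {S : Set V}
    (hS : ∀ u v, G.Adj u v → u ∈ S → v ∈ S) {u v : V}
    (h : G.Reachable u v) (hu : u ∈ S) : v ∈ S := by
  obtain ⟨p⟩ := h
  induction p with
  | nil => exact hu
  | cons h q ih => exact ih (hS _ _ h hu)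

/-- Reachability in `G ⊔ (single edge x y)` starting from a vertex. -/
lemma reach_sup_single {G : SimpleGraph V} {x y u v : V}
    (h : (G ⊔ fromEdgeSet {s(x,y)}).Walk u v)
    (hu : G.Reachable x u ∨ G.Reachable y u) :
    G.Reachable x v ∨ G.Reachable y v := by
  induction h with
  | nil => exact hu
  | @cons a b c hab p ih =>
    apply ih
    rcases hab with hab | hab
    · rcases hu with h' | h'
      · exact Or.inl (h'.trans ⟨SimpleGraph.Walk.cons hab SimpleGraph.Walk.nil⟩)
      · exact Or.inr (h'.trans ⟨SimpleGraph.Walk.cons hab SimpleGraph.Walk.nil⟩)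
    · rw [SimpleGraph.fromEdgeSet_adj] at hab
      obtain ⟨hmem, -⟩ := hab
      simp only [Set.mem_singleton_iff, Sym2.eq, Sym2.rel_iff', Prod.mk.injEq,
        Prod.swap_prod_mk] at hmem
      rcases hmem with ⟨rfl, rfl⟩ | ⟨rfl, rfl⟩
      · exact Or.inr (Reachable.refl _)
      · exact Or.inl (Reachable.refl _)

/-- Restrict a reachability statement to a comap along a map with adjacency-closed range. -/
lemma comap_reach {W : Type*} {G : SimpleGraph V} {f : W → V} (hf : Function.Injective f)
    (hcl : ∀ u v, G.Adj u v → u ∈ Set.range f → v ∈ Set.range f)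
    {a b : W} (h : G.Reachable (f a) (f b)) : (G.comap f).Reachable a b := by
  obtain ⟨p⟩ := h
  suffices H : ∀ (u v : V), G.Walk u v → ∀ a b : W, f a = u → f b = v →
      (G.comap f).Reachable a b by
    exact H _ _ p a b rfl rfl
  intro u v p
  induction p with
  | nil =>
    rintro a b rfl hb
    obtain rfl : a = b := hf hb.symm
    exact Reachable.refl _
  | @cons u' w' v' hadj q ih =>
    rintro a b rfl rfl
    obtain ⟨c, rfl⟩ : w' ∈ Set.range f := hcl _ _ hadj ⟨a, rfl⟩
    exact Reachable.trans ⟨SimpleGraph.Walk.cons (by exact hadj) SimpleGraph.Walk.nil⟩ (ih c b rfl rfl)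

variable {V W : Type*}

lemma edgeSet_map_eq (f : V ↪ W) (G : SimpleGraph V) :
    (G.map f).edgeSet = Sym2.map f '' G.edgeSet := by
  ext e
  induction e with
  | _ u v =>
    simp only [mem_edgeSet, SimpleGraph.map_adj, Set.mem_image]
    constructor
    · rintro ⟨a, b, hab, rfl, rfl⟩
      exact ⟨s(a, b), hab, rfl⟩
    · rintro ⟨e', he', hmap⟩
      induction e' with
      | _ a b =>
        simp only [Sym2.map_pair_eq, Sym2.eq, Sym2.rel_iff', Prod.mk.injEq,
          Prod.swap_prod_mk] at hmap
        rcases hmap with ⟨rfl, rfl⟩ | ⟨rfl, rfl⟩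
        · exact ⟨a, b, he', rfl, rfl⟩
        · exact ⟨b, a, (SimpleGraph.adj_symm _ he'), rfl, rfl⟩

lemma card_edgeSet_map [Finite V] (f : V ↪ W) (G : SimpleGraph V) :
    Nat.card (G.map f).edgeSet = Nat.card G.edgeSet := by
  rw [Nat.card_coe_set_eq, Nat.card_coe_set_eq, edgeSet_map_eq,
    Set.ncard_image_of_injective _ (Sym2.map.injective f.injective)]

lemma card_edgeSet_sup_of_disjoint [Finite V] {G1 G2 : SimpleGraph V}
    (h : G1.edgeSet ∩ G2.edgeSet = ∅) :
    Nat.card (G1 ⊔ G2).edgeSet = Nat.card G1.edgeSet + Nat.card G2.edgeSet := by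
  rw [Nat.card_coe_set_eq, Nat.card_coe_set_eq, Nat.card_coe_set_eq,
    edgeSet_sup, Set.ncard_union_eq (Set.disjoint_iff_inter_eq_empty.mpr h)
      (Set.toFinite _) (Set.toFinite _)]

lemma card_edgeSet_sup_single [Finite V] {G : SimpleGraph V} {x y : V}
    (hxy : x ≠ y) (hadj : ¬ G.Adj x y) :
    Nat.card (G ⊔ fromEdgeSet {s(x,y)}).edgeSet = Nat.card G.edgeSet + 1 := by
  have h1 : (fromEdgeSet {s(x,y)} : SimpleGraph V).edgeSet = {s(x,y)} := by
    rw [edgeSet_fromEdgeSet]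
    ext e
    simp only [Set.mem_diff, Set.mem_singleton_iff, Set.mem_setOf_eq]
    constructor
    · rintro ⟨rfl, -⟩; rfl
    · rintro rfl
      exact ⟨rfl, by simp [Sym2.isDiag_iff_proj_eq, hxy]⟩
  rw [card_edgeSet_sup_of_disjoint, h1]
  · simp [Nat.card_coe_set_eq]
  · rw [h1]
    ext e
    simp only [Set.mem_inter_iff, Set.mem_singleton_iff, Set.mem_empty_iff_false, iff_false,
      not_and]
    rintro he rfl
    exact hadj (G.mem_edgeSet.mp he)

def Cond {α β : Type*} (G : SimpleGraph (α ⊕ β)) (n : ℕ) : Prop :=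
  G.Connected ∧
    (∀ a b, ¬ G.Adj (Sum.inl a) (Sum.inl b)) ∧
    (∀ a b, ¬ G.Adj (Sum.inr a) (Sum.inr b)) ∧
    Nat.card G.edgeSet = n


lemma nbi_eq_card (r s : ℕ) :
    Nbi r s 0 = Nat.card {G : SimpleGraph (Fin r ⊕ Fin s) // Cond G (r + s - 1)} := rfl

lemma card_cond_congr {α β α' β' : Type*} (e1 : α ≃ α') (e2 : β ≃ β') (n : ℕ) :
    Nat.card {G : SimpleGraph (α ⊕ β) // Cond G n}
      = Nat.card {G : SimpleGraph (α' ⊕ β') // Cond G n} := by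
  set E : α ⊕ β ≃ α' ⊕ β' := Equiv.sumCongr e1 e2 with hE
  have key : ∀ G : SimpleGraph (α ⊕ β), Cond G n ↔ Cond (G.comap ⇑E.symm) n := by
    intro G
    have iso : G ≃g G.comap ⇑E.symm := ⟨E, by intro u v; simp [SimpleGraph.comap]⟩
    constructor
    · rintro ⟨hc, hl, hr, hcard⟩
      refine ⟨iso.connected_iff.mp hc, ?_, ?_, ?_⟩
      · intro a b
        show ¬ G.Adj (E.symm (Sum.inl a)) (E.symm (Sum.inl b))
        simp only [hE, Equiv.sumCongr_symm, Equiv.sumCongr_apply, Sum.map_inl]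
        exact hl _ _
      · intro a b
        show ¬ G.Adj (E.symm (Sum.inr a)) (E.symm (Sum.inr b))
        simp only [hE, Equiv.sumCongr_symm, Equiv.sumCongr_apply, Sum.map_inr]
        exact hr _ _
      · rw [← Nat.card_congr iso.mapEdgeSet]
        exact hcard
    · rintro ⟨hc, hl, hr, hcard⟩
      refine ⟨iso.connected_iff.mpr hc, ?_, ?_, ?_⟩
      · intro a b hab
        have := hl (e1 a) (e1 b)
        apply this
        show G.Adj (E.symm (Sum.inl (e1 a))) (E.symm (Sum.inl (e1 b)))
        simp only [hE, Equiv.sumCongr_symm, Equiv.sumCongr_apply, Sum.map_inl,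
          Equiv.symm_apply_apply]
        exact hab
      · intro a b hab
        have := hr (e2 a) (e2 b)
        apply this
        show G.Adj (E.symm (Sum.inr (e2 a))) (E.symm (Sum.inr (e2 b)))
        simp only [hE, Equiv.sumCongr_symm, Equiv.sumCongr_apply, Sum.map_inr,
          Equiv.symm_apply_apply]
        exact hab
      · rw [Nat.card_congr iso.mapEdgeSet]
        exact hcard
  apply Nat.card_congr
  refine Equiv.subtypeEquiv ?_ ?_
  · exact { toFun := fun G => G.comap ⇑E.symm
            invFun := fun G => G.comap ⇑E
            left_inv := fun G => by ext u v; simp [SimpleGraph.comap]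
            right_inv := fun G => by ext u v; simp [SimpleGraph.comap] }
  · intro G
    exact key G

lemma card_adj_pairs {r s n : ℕ} {G : SimpleGraph (Fin r ⊕ Fin s)} (h : Cond G n) :
    Nat.card {p : Fin r × Fin s // G.Adj (Sum.inl p.1) (Sum.inr p.2)} = n := by
  obtain ⟨-, hl, hr, hcard⟩ := h
  rw [← hcard]
  apply Nat.card_congr
  refine Equiv.ofBijective
    (fun p => (⟨s(Sum.inl p.1.1, Sum.inr p.1.2), G.mem_edgeSet.mpr p.2⟩ : G.edgeSet)) ⟨?_, ?_⟩
  · rintro ⟨⟨a, b⟩, hab⟩ ⟨⟨a', b'⟩, hab'⟩ h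
    simp only [Subtype.mk.injEq, Sym2.eq, Sym2.rel_iff', Prod.mk.injEq,
      Prod.swap_prod_mk, Sum.inl.injEq, Sum.inr.injEq, reduceCtorEq] at h
    rcases h with ⟨h1, h2⟩ | ⟨h1, h2⟩
    · exact Subtype.ext (Prod.ext h1 h2)
    · exact absurd h1 (by simp)
  · rintro ⟨e, he⟩
    induction e with
    | _ u v =>
      cases u with
      | inl a =>
        cases v with
        | inl b => exact absurd (G.mem_edgeSet.mp he) (hl a b)
        | inr b => exact ⟨⟨(a, b), G.mem_edgeSet.mp he⟩, rfl⟩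
      | inr a =>
        cases v with
        | inl b =>
          refine ⟨⟨(b, a), (G.mem_edgeSet.mp he).symm⟩, ?_⟩
          simp [Sym2.eq_swap]
        | inr b => exact absurd (G.mem_edgeSet.mp he) (hr a b)


section Decomp
variable {r s : ℕ}

/-- The canonical embedding of `↥A ⊕ ↥B` into `Fin r ⊕ Fin s`. -/
def emb (A : Finset (Fin r)) (B : Finset (Fin s)) : (↥A ⊕ ↥B) ↪ Fin r ⊕ Fin s :=
  (Function.Embedding.subtype _).sumMap (Function.Embedding.subtype _)

@[simp] lemma emb_inl (A : Finset (Fin r)) (B : Finset (Fin s)) (a : ↥A) :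
    emb A B (Sum.inl a) = Sum.inl a.val := rfl

@[simp] lemma emb_inr (A : Finset (Fin r)) (B : Finset (Fin s)) (b : ↥B) :
    emb A B (Sum.inr b) = Sum.inr b.val := rfl

lemma mem_range_emb_inl {A : Finset (Fin r)} {B : Finset (Fin s)} {a : Fin r} :
    Sum.inl a ∈ Set.range (emb A B) ↔ a ∈ A := by
  constructor
  · rintro ⟨u, hu⟩
    cases u with
    | inl a' => rw [emb_inl] at hu; cases hu; exact a'.2
    | inr b' => simp at hu
  · intro ha; exact ⟨Sum.inl ⟨a, ha⟩, rfl⟩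

lemma mem_range_emb_inr {A : Finset (Fin r)} {B : Finset (Fin s)} {b : Fin s} :
    Sum.inr b ∈ Set.range (emb A B) ↔ b ∈ B := by
  constructor
  · rintro ⟨u, hu⟩
    cases u with
    | inl a' => simp at hu
    | inr b' => rw [emb_inr] at hu; cases hu; exact b'.2
  · intro hb; exact ⟨Sum.inr ⟨b, hb⟩, rfl⟩

end Decomp

section Decomp2
variable {r s : ℕ}

/-- The set of vertices reachable from `inl x` in `H`. -/
def reachSet (H : SimpleGraph (Fin r ⊕ Fin s)) (x : Fin r) : Set (Fin r ⊕ Fin s) :=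
  {v | H.Reachable (Sum.inl x) v}

noncomputable def reachA (H : SimpleGraph (Fin r ⊕ Fin s)) (x : Fin r) : Finset (Fin r) :=
  (Set.toFinite {a : Fin r | H.Reachable (Sum.inl x) (Sum.inl a)}).toFinset

noncomputable def reachB (H : SimpleGraph (Fin r ⊕ Fin s)) (x : Fin r) : Finset (Fin s) :=
  (Set.toFinite {b : Fin s | H.Reachable (Sum.inl x) (Sum.inr b)}).toFinset

@[simp] lemma mem_reachA {H : SimpleGraph (Fin r ⊕ Fin s)} {x : Fin r} {a : Fin r} :
    a ∈ reachA H x ↔ H.Reachable (Sum.inl x) (Sum.inl a) := by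
  simp [reachA, Set.Finite.mem_toFinset]

@[simp] lemma mem_reachB {H : SimpleGraph (Fin r ⊕ Fin s)} {x : Fin r} {b : Fin s} :
    b ∈ reachB H x ↔ H.Reachable (Sum.inl x) (Sum.inr b) := by
  simp [reachB, Set.Finite.mem_toFinset]

variable {H : SimpleGraph (Fin r ⊕ Fin s)} {x : Fin r} {y : Fin s}

lemma reachSet_closed : ∀ u v, H.Adj u v → u ∈ reachSet H x → v ∈ reachSet H x :=
  fun _ v hadj hu => hu.trans ⟨SimpleGraph.Walk.cons hadj SimpleGraph.Walk.nil⟩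

lemma reachSet_closed' : ∀ u v, H.Adj u v → v ∈ reachSet H x → u ∈ reachSet H x :=
  fun u _ hadj hv => hv.trans ⟨SimpleGraph.Walk.cons hadj.symm SimpleGraph.Walk.nil⟩

lemma range_emb_reach :
    Set.range (emb (reachA H x) (reachB H x)) = reachSet H x := by
  ext v
  cases v with
  | inl a => rw [mem_range_emb_inl, mem_reachA]; rfl
  | inr b => rw [mem_range_emb_inr, mem_reachB]; rfl

lemma range_emb_reach_compl :
    Set.range (emb (reachA H x)ᶜ (reachB H x)ᶜ) = (reachSet H x)ᶜ := by
  ext v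
  cases v with
  | inl a =>
    rw [mem_range_emb_inl, Finset.mem_compl, mem_reachA]
    exact Iff.rfl.not
  | inr b =>
    rw [mem_range_emb_inr, Finset.mem_compl, mem_reachB]
    exact Iff.rfl.not

lemma card_H_edges (hna : ¬ H.Adj (Sum.inl x) (Sum.inr y))
    (hc : Cond (H ⊔ fromEdgeSet {s(Sum.inl x, Sum.inr y)}) (r+s-1)) : Nat.card H.edgeSet = r + s - 2 ∧ 1 ≤ r ∧ 1 ≤ s := by
  have h1 : 1 ≤ r := Fin.pos x
  have h2 : 1 ≤ s := Fin.pos y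
  have := card_edgeSet_sup_single (G := H) (x := Sum.inl x) (y := Sum.inr y) (by simp) hna
  rw [hc.2.2.2] at this
  have hrs : 2 ≤ r + s := by omega
  omega

/-- Everything is reachable from `inl x` or from `inr y` in `H`. -/
lemma reach_dichotomy
    (hc : Cond (H ⊔ fromEdgeSet {s(Sum.inl x, Sum.inr y)}) (r+s-1)) (v : Fin r ⊕ Fin s) :
    v ∈ reachSet H x ∨ H.Reachable (Sum.inr y) v := by
  obtain ⟨w⟩ := hc.1.preconnected (Sum.inl x) v
  exact reach_sup_single w (Or.inl (Reachable.refl _))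

/-- `inr y` is not reachable from `inl x` in `H`. -/
lemma y_not_reachable (hna : ¬ H.Adj (Sum.inl x) (Sum.inr y))
    (hc : Cond (H ⊔ fromEdgeSet {s(Sum.inl x, Sum.inr y)}) (r+s-1)) : ¬ H.Reachable (Sum.inl x) (Sum.inr y) := by
  intro hreach
  obtain ⟨hE, hr1, hs1⟩ := card_H_edges hna hc
  have hconn : H.Connected := by
    have hpre : ∀ v, H.Reachable (Sum.inl x) v := by
      intro v
      rcases reach_dichotomy hc v with h | h
      · exact h
      · exact hreach.trans h
    rw [connected_iff]
    exact ⟨fun u v => (hpre u).symm.trans (hpre v), ⟨Sum.inl x⟩⟩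
  have := connected_card_le H hconn
  rw [hE] at this
  simp only [Fintype.card_sum, Fintype.card_fin] at this
  omega

end Decomp2

section Decomp3
variable {r s : ℕ} {H : SimpleGraph (Fin r ⊕ Fin s)} {x : Fin r} {y : Fin s}

lemma decomp_eq (hna : ¬ H.Adj (Sum.inl x) (Sum.inr y))
    (hc : Cond (H ⊔ fromEdgeSet {s(Sum.inl x, Sum.inr y)}) (r+s-1)) :
    (H.comap ⇑(emb (reachA H x) (reachB H x))).map (emb (reachA H x) (reachB H x)) ⊔
      (H.comap ⇑(emb (reachA H x)ᶜ (reachB H x)ᶜ)).map (emb (reachA H x)ᶜ (reachB H x)ᶜ) = H := by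
  ext u v
  constructor
  · rintro (h | h)
    · exact map_comap_le _ _ h
    · exact map_comap_le _ _ h
  · intro h
    by_cases hu : u ∈ reachSet H x
    · left
      have hv : v ∈ reachSet H x := reachSet_closed u v h hu
      rw [← range_emb_reach] at hu hv
      obtain ⟨u', rfl⟩ := hu
      obtain ⟨v', rfl⟩ := hv
      exact SimpleGraph.map_adj_apply.mpr h
    · right
      have hv : v ∉ reachSet H x := fun hv => hu (reachSet_closed' u v h hv)
      have hu' : u ∈ (reachSet H x)ᶜ := hu
      have hv' : v ∈ (reachSet H x)ᶜ := hv
      rw [← range_emb_reach_compl] at hu' hv'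
      obtain ⟨u', rfl⟩ := hu'
      obtain ⟨v', rfl⟩ := hv'
      exact SimpleGraph.map_adj_apply.mpr h

lemma cond_both (hna : ¬ H.Adj (Sum.inl x) (Sum.inr y))
    (hc : Cond (H ⊔ fromEdgeSet {s(Sum.inl x, Sum.inr y)}) (r+s-1)) :
    Cond (H.comap ⇑(emb (reachA H x) (reachB H x)))
        ((reachA H x).card + (reachB H x).card - 1) ∧
      Cond (H.comap ⇑(emb (reachA H x)ᶜ (reachB H x)ᶜ))
        ((reachA H x)ᶜ.card + (reachB H x)ᶜ.card - 1) := by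
  set A := reachA H x with hA
  set B := reachB H x with hB
  have hHle : H ≤ H ⊔ fromEdgeSet {s(Sum.inl x, Sum.inr y)} := le_sup_left
  have hnol : ∀ a b, ¬ H.Adj (Sum.inl a) (Sum.inl b) := fun a b hab => hc.2.1 a b (hHle hab)
  have hnor : ∀ a b, ¬ H.Adj (Sum.inr a) (Sum.inr b) := fun a b hab => hc.2.2.1 a b (hHle hab)
  have hxA : x ∈ A := mem_reachA.mpr (Reachable.refl _)
  have hyB : y ∈ Bᶜ := Finset.mem_compl.mpr (fun hy => y_not_reachable hna hc (mem_reachB.mp hy))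
  -- connectivity of T1
  have hcl1 : ∀ u v, H.Adj u v → u ∈ Set.range (emb A B) → v ∈ Set.range (emb A B) := by
    rw [range_emb_reach]
    exact reachSet_closed
  have hconn1 : (H.comap ⇑(emb A B)).Connected := by
    rw [connected_iff]
    refine ⟨?_, ⟨Sum.inl ⟨x, hxA⟩⟩⟩
    intro u v
    have hu : emb A B u ∈ reachSet H x := by
      rw [← range_emb_reach]; exact ⟨u, rfl⟩
    have hv : emb A B v ∈ reachSet H x := by
      rw [← range_emb_reach]; exact ⟨v, rfl⟩
    exact comap_reach (emb A B).injective hcl1 (hu.symm.trans hv)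
  -- connectivity of T2
  have hcl2 : ∀ u v, H.Adj u v → u ∈ Set.range (emb Aᶜ Bᶜ) → v ∈ Set.range (emb Aᶜ Bᶜ) := by
    rw [range_emb_reach_compl]
    intro u v hadj hu hv
    exact hu (reachSet_closed' u v hadj hv)
  have hreach2 : ∀ u : ↥Aᶜ ⊕ ↥Bᶜ, H.Reachable (Sum.inr y) (emb Aᶜ Bᶜ u) := by
    intro u
    have hu : emb Aᶜ Bᶜ u ∈ (reachSet H x)ᶜ := by
      rw [← range_emb_reach_compl]; exact ⟨u, rfl⟩
    rcases reach_dichotomy hc (emb Aᶜ Bᶜ u) with h | h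
    · exact absurd h hu
    · exact h
  have hconn2 : (H.comap ⇑(emb Aᶜ Bᶜ)).Connected := by
    rw [connected_iff]
    refine ⟨?_, ⟨Sum.inr ⟨y, hyB⟩⟩⟩
    intro u v
    exact comap_reach (emb Aᶜ Bᶜ).injective hcl2 ((hreach2 u).symm.trans (hreach2 v))
  -- edge count decomposition
  have hdisj : ((H.comap ⇑(emb A B)).map (emb A B)).edgeSet ∩
      ((H.comap ⇑(emb Aᶜ Bᶜ)).map (emb Aᶜ Bᶜ)).edgeSet = ∅ := by
    ext e
    simp only [Set.mem_inter_iff, Set.mem_empty_iff_false, iff_false, not_and]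
    rw [edgeSet_map_eq, edgeSet_map_eq]
    rintro ⟨e1, he1, rfl⟩ ⟨e2, he2, heq⟩
    induction e1 with
    | _ a b =>
      induction e2 with
      | _ c d =>
        simp only [Sym2.map_pair_eq, Sym2.eq, Sym2.rel_iff', Prod.mk.injEq,
          Prod.swap_prod_mk] at heq
        have key : ∀ (w1 : ↥A ⊕ ↥B) (w2 : ↥Aᶜ ⊕ ↥Bᶜ), emb Aᶜ Bᶜ w2 ≠ emb A B w1 := by
          intro w1 w2 hw
          have h1 : emb A B w1 ∈ reachSet H x := by
            rw [← range_emb_reach]; exact ⟨w1, rfl⟩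
          have h2 : emb A B w1 ∈ (reachSet H x)ᶜ := by
            rw [← range_emb_reach_compl]; exact ⟨w2, hw⟩
          exact h2 h1
        rcases heq with ⟨h1, -⟩ | ⟨h1, -⟩
        · exact key a c h1
        · exact key b c h1
  have hsum : Nat.card (H.comap ⇑(emb A B)).edgeSet +
      Nat.card (H.comap ⇑(emb Aᶜ Bᶜ)).edgeSet = r + s - 2 := by
    have h1 := card_edgeSet_sup_of_disjoint hdisj
    rw [decomp_eq hna hc] at h1
    rw [card_edgeSet_map, card_edgeSet_map] at h1
    rw [(card_H_edges hna hc).1] at h1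
    omega
  -- cardinality bounds
  have hb1 := connected_card_le _ hconn1
  have hb2 := connected_card_le _ hconn2
  rw [Fintype.card_sum, Fintype.card_coe, Fintype.card_coe] at hb1 hb2
  have hAc : A.card + Aᶜ.card = r := by
    rw [Finset.card_add_card_compl]; simp
  have hBc : B.card + Bᶜ.card = s := by
    rw [Finset.card_add_card_compl]; simp
  have hA1 : 1 ≤ A.card := Finset.card_pos.mpr ⟨x, hxA⟩
  have hB1 : 1 ≤ Bᶜ.card := Finset.card_pos.mpr ⟨y, hyB⟩
  refine ⟨⟨hconn1, fun a b hab => hnol _ _ hab, fun a b hab => hnor _ _ hab, ?_⟩,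
    ⟨hconn2, fun a b hab => hnol _ _ hab, fun a b hab => hnor _ _ hab, ?_⟩⟩ <;> omega

end Decomp3

section Backward
variable {r s : ℕ}

lemma emb_ranges_disjoint (A : Finset (Fin r)) (B : Finset (Fin s)) :
    ∀ (w1 : ↥A ⊕ ↥B) (w2 : ↥Aᶜ ⊕ ↥Bᶜ), emb Aᶜ Bᶜ w2 ≠ emb A B w1 := by
  rintro (a | b) (c | d) h <;> simp_all only [emb_inl, emb_inr, Sum.inl.injEq, Sum.inr.injEq,
    reduceCtorEq]
  · have := c.2; rw [h] at this; exact (Finset.mem_compl.mp this) a.2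
  · have := d.2; rw [h] at this; exact (Finset.mem_compl.mp this) b.2

lemma map_edge_disjoint (A : Finset (Fin r)) (B : Finset (Fin s))
    (T1 : SimpleGraph (↥A ⊕ ↥B)) (T2 : SimpleGraph (↥Aᶜ ⊕ ↥Bᶜ)) :
    (T1.map (emb A B)).edgeSet ∩ (T2.map (emb Aᶜ Bᶜ)).edgeSet = ∅ := by
  ext e
  simp only [Set.mem_inter_iff, Set.mem_empty_iff_false, iff_false, not_and]
  rw [edgeSet_map_eq, edgeSet_map_eq]
  rintro ⟨e1, he1, rfl⟩ ⟨e2, he2, heq⟩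
  induction e1 with
  | _ a b =>
    induction e2 with
    | _ c d =>
      simp only [Sym2.map_pair_eq, Sym2.eq, Sym2.rel_iff', Prod.mk.injEq,
        Prod.swap_prod_mk] at heq
      rcases heq with ⟨h1, -⟩ | ⟨h1, -⟩
      · exact emb_ranges_disjoint A B a c h1
      · exact emb_ranges_disjoint A B b c h1

variable {A : Finset (Fin r)} {B : Finset (Fin s)}
  {T1 : SimpleGraph (↥A ⊕ ↥B)} {T2 : SimpleGraph (↥Aᶜ ⊕ ↥Bᶜ)} {x : Fin r} {y : Fin s}

/-- Adjacencies to `inl x` for `x ∈ A` land in `range (emb A B)`. -/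
lemma glued_not_adj (hx : x ∈ A) (hy : y ∉ B) :
    ¬ (T1.map (emb A B) ⊔ T2.map (emb Aᶜ Bᶜ)).Adj (Sum.inl x) (Sum.inr y) := by
  rintro (⟨-, u', v', h, hu, hv⟩ | ⟨-, u', v', h, hu, hv⟩)
  · cases v' with
    | inl a => simp at hv
    | inr b => rw [emb_inr] at hv; cases hv; exact hy b.2
  · cases u' with
    | inl a =>
      rw [emb_inl] at hu; cases hu
      exact (Finset.mem_compl.mp a.2) hx
    | inr b => simp at hu

lemma glued_closed1 :
    ∀ u v, (T1.map (emb A B) ⊔ T2.map (emb Aᶜ Bᶜ)).Adj u v →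
      u ∈ Set.range (emb A B) → v ∈ Set.range (emb A B) := by
  rintro u v (⟨-, u', v', h, rfl, rfl⟩ | ⟨-, u', v', h, rfl, rfl⟩) hu
  · exact ⟨v', rfl⟩
  · exfalso
    obtain ⟨w, hw⟩ := hu
    exact emb_ranges_disjoint A B w u' hw.symm

lemma glued_comap1 : (T1.map (emb A B) ⊔ T2.map (emb Aᶜ Bᶜ)).comap ⇑(emb A B) = T1 := by
  ext u v
  show (T1.map (emb A B) ⊔ T2.map (emb Aᶜ Bᶜ)).Adj (emb A B u) (emb A B v) ↔ _
  constructor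
  · rintro (h | ⟨-, u', v', h, hu, hv⟩)
    · exact (SimpleGraph.map_adj_apply).mp h
    · exact absurd hu (emb_ranges_disjoint A B u u')
  · intro h
    exact Or.inl (SimpleGraph.map_adj_apply.mpr h)

lemma glued_comap2 : (T1.map (emb A B) ⊔ T2.map (emb Aᶜ Bᶜ)).comap ⇑(emb Aᶜ Bᶜ) = T2 := by
  ext u v
  show (T1.map (emb A B) ⊔ T2.map (emb Aᶜ Bᶜ)).Adj (emb Aᶜ Bᶜ u) (emb Aᶜ Bᶜ v) ↔ _
  constructor
  · rintro (⟨-, u', v', h, hu, hv⟩ | h)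
    · exact absurd hu.symm (emb_ranges_disjoint A B u' u)
    · exact (SimpleGraph.map_adj_apply).mp h
  · intro h
    exact Or.inr (SimpleGraph.map_adj_apply.mpr h)

end Backward

section Backward2
variable {r s : ℕ} {A : Finset (Fin r)} {B : Finset (Fin s)}
  {T1 : SimpleGraph (↥A ⊕ ↥B)} {T2 : SimpleGraph (↥Aᶜ ⊕ ↥Bᶜ)} {x : Fin r} {y : Fin s}

/-- Hom from `T1` into the glued graph. -/
def homT1 (T1 : SimpleGraph (↥A ⊕ ↥B)) (T2 : SimpleGraph (↥Aᶜ ⊕ ↥Bᶜ)) :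
    T1 →g (T1.map (emb A B) ⊔ T2.map (emb Aᶜ Bᶜ)) where
  toFun := emb A B
  map_rel' := fun h => Or.inl (SimpleGraph.map_adj_apply.mpr h)

def homT2 (T1 : SimpleGraph (↥A ⊕ ↥B)) (T2 : SimpleGraph (↥Aᶜ ⊕ ↥Bᶜ)) :
    T2 →g (T1.map (emb A B) ⊔ T2.map (emb Aᶜ Bᶜ)) where
  toFun := emb Aᶜ Bᶜ
  map_rel' := fun h => Or.inr (SimpleGraph.map_adj_apply.mpr h)

lemma glued_reach (hx : x ∈ A) (hc1 : T1.Connected) :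
    reachA (T1.map (emb A B) ⊔ T2.map (emb Aᶜ Bᶜ)) x = A
      ∧ reachB (T1.map (emb A B) ⊔ T2.map (emb Aᶜ Bᶜ)) x = B := by
  set H := T1.map (emb A B) ⊔ T2.map (emb Aᶜ Bᶜ) with hH
  have hstart : (Sum.inl x : Fin r ⊕ Fin s) ∈ Set.range (emb A B) :=
    ⟨Sum.inl ⟨x, hx⟩, rfl⟩
  constructor
  · ext a
    rw [mem_reachA]
    constructor
    · intro h
      have := reach_closed glued_closed1 h hstart
      exact mem_range_emb_inl.mp this
    · intro ha
      have := hc1.preconnected (Sum.inl ⟨x, hx⟩) (Sum.inl ⟨a, ha⟩)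
      exact this.map (homT1 T1 T2)
  · ext b
    rw [mem_reachB]
    constructor
    · intro h
      have := reach_closed glued_closed1 h hstart
      exact mem_range_emb_inr.mp this
    · intro hb
      have := hc1.preconnected (Sum.inl ⟨x, hx⟩) (Sum.inr ⟨b, hb⟩)
      exact this.map (homT1 T1 T2)

lemma glued_cond (hx : x ∈ A) (hy : y ∉ B)
    (hc1 : Cond T1 (A.card + B.card - 1)) (hc2 : Cond T2 (Aᶜ.card + Bᶜ.card - 1)) :
    Cond ((T1.map (emb A B) ⊔ T2.map (emb Aᶜ Bᶜ)) ⊔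
      fromEdgeSet {s(Sum.inl x, Sum.inr y)}) (r + s - 1) := by
  set H := T1.map (emb A B) ⊔ T2.map (emb Aᶜ Bᶜ) with hH
  set K := H ⊔ fromEdgeSet {s(Sum.inl x, Sum.inr y)} with hK
  have hyB : y ∈ Bᶜ := Finset.mem_compl.mpr hy
  have hHle : H ≤ K := le_sup_left
  have hKxy : K.Adj (Sum.inl x) (Sum.inr y) := by
    refine Or.inr ((SimpleGraph.fromEdgeSet_adj _).mpr ⟨rfl, by simp⟩)
  have hK1 : ∀ u : ↥A ⊕ ↥B, K.Reachable (Sum.inl x) (emb A B u) := by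
    intro u
    have := (hc1.1.preconnected (Sum.inl ⟨x, hx⟩) u).map (homT1 T1 T2)
    exact this.mono hHle
  have hK2 : ∀ u : ↥Aᶜ ⊕ ↥Bᶜ, K.Reachable (Sum.inr y) (emb Aᶜ Bᶜ u) := by
    intro u
    have := (hc2.1.preconnected (Sum.inr ⟨y, hyB⟩) u).map (homT2 T1 T2)
    exact this.mono hHle
  have hpre : ∀ v, K.Reachable (Sum.inl x) v := by
    intro v
    cases v with
    | inl a =>
      by_cases ha : a ∈ A
      · exact hK1 (Sum.inl ⟨a, ha⟩)
      · exact (hKxy.reachable).trans (hK2 (Sum.inl ⟨a, Finset.mem_compl.mpr ha⟩))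
    | inr b =>
      by_cases hb : b ∈ B
      · exact hK1 (Sum.inr ⟨b, hb⟩)
      · exact (hKxy.reachable).trans (hK2 (Sum.inr ⟨b, Finset.mem_compl.mpr hb⟩))
  refine ⟨?_, ?_, ?_, ?_⟩
  · rw [connected_iff]
    exact ⟨fun u v => ((hpre u).symm.trans (hpre v)), ⟨Sum.inl x⟩⟩
  · rintro a b ((⟨-, u', v', h, hu, hv⟩ | ⟨-, u', v', h, hu, hv⟩) | he)
    · cases u' with
      | inl a' =>
        cases v' with
        | inl b' => exact hc1.2.1 a' b' h
        | inr b' => simp at hv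
      | inr a' => simp at hu
    · cases u' with
      | inl a' =>
        cases v' with
        | inl b' => exact hc2.2.1 a' b' h
        | inr b' => simp at hv
      | inr a' => simp at hu
    · have := ((SimpleGraph.fromEdgeSet_adj _).mp he).1
      simp only [Set.mem_singleton_iff, Sym2.eq, Sym2.rel_iff', Prod.mk.injEq,
        Prod.swap_prod_mk, reduceCtorEq, and_false, false_and, or_self] at this
  · rintro a b ((⟨-, u', v', h, hu, hv⟩ | ⟨-, u', v', h, hu, hv⟩) | he)
    · cases u' with
      | inr a' =>
        cases v' with
        | inr b' => exact hc1.2.2.1 a' b' h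
        | inl b' => simp at hv
      | inl a' => simp at hu
    · cases u' with
      | inr a' =>
        cases v' with
        | inr b' => exact hc2.2.2.1 a' b' h
        | inl b' => simp at hv
      | inl a' => simp at hu
    · have := ((SimpleGraph.fromEdgeSet_adj _).mp he).1
      simp only [Set.mem_singleton_iff, Sym2.eq, Sym2.rel_iff', Prod.mk.injEq,
        Prod.swap_prod_mk, reduceCtorEq, and_false, false_and, or_self] at this
  · have h1 : Nat.card K.edgeSet = Nat.card H.edgeSet + 1 := by
      apply card_edgeSet_sup_single (by simp)
      exact glued_not_adj hx hy
    have h2 : Nat.card H.edgeSet = Nat.card T1.edgeSet + Nat.card T2.edgeSet := by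
      rw [hH, card_edgeSet_sup_of_disjoint (map_edge_disjoint A B T1 T2),
        card_edgeSet_map, card_edgeSet_map]
    have hAc : A.card + Aᶜ.card = r := by rw [Finset.card_add_card_compl]; simp
    have hBc : B.card + Bᶜ.card = s := by rw [Finset.card_add_card_compl]; simp
    have hA1 : 1 ≤ A.card := Finset.card_pos.mpr ⟨x, hx⟩
    have hB1 : 1 ≤ Bᶜ.card := Finset.card_pos.mpr ⟨y, hyB⟩
    rw [h1, h2, hc1.2.2.2, hc2.2.2.2]
    omega

end Backward2

section Toggle
variable {V : Type*} [DecidableEq V]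

lemma not_adj_deleteEdges (G : SimpleGraph V) (x y : V) :
    ¬ (G.deleteEdges {s(x,y)}).Adj x y := by
  rw [SimpleGraph.deleteEdges_adj]
  rintro ⟨-, h⟩
  exact h rfl

lemma deleteEdges_sup_cancel {G : SimpleGraph V} {x y : V} (h : G.Adj x y) :
    G.deleteEdges {s(x,y)} ⊔ fromEdgeSet {s(x,y)} = G := by
  ext u v
  rw [SimpleGraph.sup_adj, SimpleGraph.deleteEdges_adj, SimpleGraph.fromEdgeSet_adj]
  constructor
  · rintro (⟨h1, -⟩ | ⟨h1, -⟩)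
    · exact h1
    · rw [Set.mem_singleton_iff] at h1
      rw [Sym2.eq, Sym2.rel_iff'] at h1
      rcases h1 with h1 | h1
      · rw [Prod.mk.injEq] at h1; obtain ⟨rfl, rfl⟩ := h1; exact h
      · rw [Prod.ext_iff] at h1
        obtain ⟨rfl, rfl⟩ := h1
        exact h.symm
  · intro huv
    by_cases he : s(u, v) ∈ ({s(x,y)} : Set (Sym2 V))
    · exact Or.inr ⟨he, huv.ne⟩
    · exact Or.inl ⟨huv, he⟩

lemma sup_deleteEdges_cancel {H : SimpleGraph V} {x y : V} (h : ¬ H.Adj x y) :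
    (H ⊔ fromEdgeSet {s(x,y)}).deleteEdges {s(x,y)} = H := by
  ext u v
  rw [SimpleGraph.deleteEdges_adj, SimpleGraph.sup_adj, SimpleGraph.fromEdgeSet_adj]
  constructor
  · rintro ⟨h1 | ⟨h1, -⟩, h2⟩
    · exact h1
    · exact absurd h1 h2
  · intro huv
    refine ⟨Or.inl huv, ?_⟩
    intro hmem
    rw [Set.mem_singleton_iff, Sym2.eq, Sym2.rel_iff'] at hmem
    rcases hmem with hm | hm
    · rw [Prod.mk.injEq] at hm; obtain ⟨rfl, rfl⟩ := hm; exact h huv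
    · rw [Prod.ext_iff] at hm
      obtain ⟨rfl, rfl⟩ := hm
      exact h huv.symm
end Toggle

section Assembly
variable (r s : ℕ)

def PT := {q : SimpleGraph (Fin r ⊕ Fin s) × Fin r × Fin s //
  Cond q.1 (r+s-1) ∧ q.1.Adj (Sum.inl q.2.1) (Sum.inr q.2.2)}

def P'T := {q : SimpleGraph (Fin r ⊕ Fin s) × Fin r × Fin s //
  ¬ q.1.Adj (Sum.inl q.2.1) (Sum.inr q.2.2) ∧
    Cond (q.1 ⊔ fromEdgeSet {s(Sum.inl q.2.1, Sum.inr q.2.2)}) (r+s-1)}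

noncomputable def toggleEquiv : PT r s ≃ P'T r s where
  toFun q := ⟨(q.1.1.deleteEdges {s(Sum.inl q.1.2.1, Sum.inr q.1.2.2)}, q.1.2.1, q.1.2.2),
    not_adj_deleteEdges _ _ _, by
      rw [deleteEdges_sup_cancel q.2.2]
      exact q.2.1⟩
  invFun q := ⟨(q.1.1 ⊔ fromEdgeSet {s(Sum.inl q.1.2.1, Sum.inr q.1.2.2)}, q.1.2.1, q.1.2.2),
    q.2.2, Or.inr ((SimpleGraph.fromEdgeSet_adj _).mpr ⟨rfl, by simp⟩)⟩
  left_inv q := by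
    apply Subtype.ext
    obtain ⟨⟨G, x, y⟩, hcond, hadj⟩ := q
    simp only
    rw [deleteEdges_sup_cancel hadj]
  right_inv q := by
    apply Subtype.ext
    obtain ⟨⟨H, x, y⟩, hna, hcond⟩ := q
    simp only
    rw [sup_deleteEdges_cancel hna]

lemma nat_card_sigma {ι : Type*} [Fintype ι] (F : ι → Type*) [∀ i, Finite (F i)] :
    Nat.card (Σ i, F i) = ∑ i, Nat.card (F i) := by
  letI : ∀ i, Fintype (F i) := fun i => Fintype.ofFinite _
  simp [Nat.card_eq_fintype_card, Fintype.card_sigma]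

noncomputable instance : Fintype (SimpleGraph (Fin r ⊕ Fin s)) := by
  classical exact Fintype.ofFinite _

lemma card_PT : Nat.card (PT r s) = (r + s - 1) * Nbi r s 0 := by
  classical
  have e1 : PT r s ≃ Σ (G : {G : SimpleGraph (Fin r ⊕ Fin s) // Cond G (r+s-1)}),
      {p : Fin r × Fin s // G.1.Adj (Sum.inl p.1) (Sum.inr p.2)} :=
    { toFun := fun q => ⟨⟨q.1.1, q.2.1⟩, ⟨q.1.2, q.2.2⟩⟩
      invFun := fun q => ⟨(q.1.1, q.2.1), q.1.2, q.2.2⟩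
      left_inv := fun q => rfl
      right_inv := fun q => rfl }
  rw [Nat.card_congr e1, nat_card_sigma]
  rw [Finset.sum_congr rfl (fun G _ => card_adj_pairs G.2)]
  rw [Finset.sum_const, smul_eq_mul, Finset.card_univ, nbi_eq_card,
    Nat.card_eq_fintype_card, mul_comm]

end Assembly

section FiberEquiv
variable {r s : ℕ}

/-- The marked-tree data type for a fixed pair of subsets. -/
def MT (A : Finset (Fin r)) (B : Finset (Fin s)) :=
  ({x : Fin r // x ∈ A} × {y : Fin s // y ∉ B}) ×
    ({T : SimpleGraph (↥A ⊕ ↥B) // Cond T (A.card + B.card - 1)} ×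
     {T' : SimpleGraph (↥Aᶜ ⊕ ↥Bᶜ) // Cond T' (Aᶜ.card + Bᶜ.card - 1)})

def FibT (A : Finset (Fin r)) (B : Finset (Fin s)) :=
  {q : SimpleGraph (Fin r ⊕ Fin s) × Fin r × Fin s //
    (¬ q.1.Adj (Sum.inl q.2.1) (Sum.inr q.2.2) ∧
      Cond (q.1 ⊔ fromEdgeSet {s(Sum.inl q.2.1, Sum.inr q.2.2)}) (r+s-1)) ∧
    reachA q.1 q.2.1 = A ∧ reachB q.1 q.2.1 = B}

noncomputable def fibEquiv (A : Finset (Fin r)) (B : Finset (Fin s)) :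
    FibT A B ≃ MT A B where
  toFun q :=
    ⟨⟨⟨q.1.2.1, by
        obtain ⟨⟨H, x, y⟩, ⟨hna, hc⟩, hA, hB⟩ := q
        show x ∈ A
        rw [← hA]
        exact mem_reachA.mpr (Reachable.refl _)⟩,
      ⟨q.1.2.2, by
        obtain ⟨⟨H, x, y⟩, ⟨hna, hc⟩, hA, hB⟩ := q
        show y ∉ B
        rw [← hB]
        simp only [mem_reachB]
        exact y_not_reachable hna hc⟩⟩,
     ⟨⟨q.1.1.comap ⇑(emb A B), by
        obtain ⟨⟨H, x, y⟩, ⟨hna, hc⟩, hA, hB⟩ := q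
        have := (cond_both hna hc).1
        rw [hA, hB] at this
        exact this⟩,
      ⟨q.1.1.comap ⇑(emb Aᶜ Bᶜ), by
        obtain ⟨⟨H, x, y⟩, ⟨hna, hc⟩, hA, hB⟩ := q
        have := (cond_both hna hc).2
        rw [hA, hB] at this
        exact this⟩⟩⟩
  invFun m :=
    ⟨(m.2.1.1.map (emb A B) ⊔ m.2.2.1.map (emb Aᶜ Bᶜ), m.1.1.1, m.1.2.1),
     ⟨glued_not_adj m.1.1.2 m.1.2.2, glued_cond m.1.1.2 m.1.2.2 m.2.1.2 m.2.2.2⟩,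
     (glued_reach m.1.1.2 m.2.1.2.1).1, (glued_reach m.1.1.2 m.2.1.2.1).2⟩
  left_inv q := by
    apply Subtype.ext
    obtain ⟨⟨H, x, y⟩, ⟨hna, hc⟩, hA, hB⟩ := q
    simp only
    have := decomp_eq hna hc
    rw [hA, hB] at this
    rw [this]
  right_inv m := by
    obtain ⟨⟨⟨x, hx⟩, ⟨y, hy⟩⟩, ⟨T1, h1⟩, ⟨T2, h2⟩⟩ := m
    have e1 : (SimpleGraph.map (emb A B) T1 ⊔ SimpleGraph.map (emb Aᶜ Bᶜ) T2).comap
        ⇑(emb A B) = T1 := glued_comap1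
    have e2 : (SimpleGraph.map (emb A B) T1 ⊔ SimpleGraph.map (emb Aᶜ Bᶜ) T2).comap
        ⇑(emb Aᶜ Bᶜ) = T2 := glued_comap2
    exact Prod.ext (Prod.ext (Subtype.ext rfl) (Subtype.ext rfl))
      (Prod.ext (Subtype.ext e1) (Subtype.ext e2))

end FiberEquiv

section Count
variable {r s : ℕ}

lemma card_MT (A : Finset (Fin r)) (B : Finset (Fin s)) :
    Nat.card (MT A B) =
      A.card * (s - B.card) * (Nbi A.card B.card 0 * Nbi (r - A.card) (s - B.card) 0) := by
  classical
  have hAc : Aᶜ.card = r - A.card := by rw [Finset.card_compl]; simp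
  have hBc : Bᶜ.card = s - B.card := by rw [Finset.card_compl]; simp
  have h1 : Nat.card {x : Fin r // x ∈ A} = A.card := by
    rw [Nat.card_eq_fintype_card]; exact Fintype.card_coe A
  have h2 : Nat.card {y : Fin s // y ∉ B} = s - B.card := by
    rw [Nat.card_eq_fintype_card, Fintype.card_subtype_compl]
    congr 1
    · simp
    · exact Fintype.card_coe B
  have h3 : Nat.card {T : SimpleGraph (↥A ⊕ ↥B) // Cond T (A.card + B.card - 1)}
      = Nbi A.card B.card 0 := by
    rw [card_cond_congr A.equivFin B.equivFin, nbi_eq_card]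
  have h4 : Nat.card {T' : SimpleGraph (↥Aᶜ ⊕ ↥Bᶜ) // Cond T' (Aᶜ.card + Bᶜ.card - 1)}
      = Nbi (r - A.card) (s - B.card) 0 := by
    rw [card_cond_congr Aᶜ.equivFin Bᶜ.equivFin, hAc, hBc, nbi_eq_card]
  show Nat.card (_ × _) = _
  rw [Nat.card_prod, Nat.card_prod, Nat.card_prod, h1, h2, h3, h4]

instance fibT_finite (A : Finset (Fin r)) (B : Finset (Fin s)) : Finite (FibT A B) := by
  unfold FibT; exact Subtype.finite

lemma card_P'T :
    Nat.card (P'T r s) = ∑ A : Finset (Fin r), ∑ B : Finset (Fin s),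
      A.card * (s - B.card) * (Nbi A.card B.card 0 * Nbi (r - A.card) (s - B.card) 0) := by
  classical
  have e1 : P'T r s ≃ Σ AB : Finset (Fin r) × Finset (Fin s), FibT AB.1 AB.2 :=
    { toFun := fun q => ⟨(reachA q.1.1 q.1.2.1, reachB q.1.1 q.1.2.1), ⟨q.1, q.2, rfl, rfl⟩⟩
      invFun := fun q => ⟨q.2.1, q.2.2.1⟩
      left_inv := fun q => rfl
      right_inv := fun q => by
        obtain ⟨AB, ⟨p, hp, hA, hB⟩⟩ := q
        have hAB : (reachA p.1 p.2.1, reachB p.1 p.2.1) = AB := Prod.ext hA hB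
        subst hAB
        rfl }
  rw [Nat.card_congr e1, nat_card_sigma]
  rw [Fintype.sum_prod_type]
  refine Finset.sum_congr rfl fun A _ => Finset.sum_congr rfl fun B _ => ?_
  rw [Nat.card_congr (fibEquiv A B), card_MT]

lemma nbi_zero_zero : Nbi 0 0 0 = 0 := by
  rw [nbi_eq_card]
  rw [Nat.card_eq_zero]
  left
  refine ⟨fun G => ?_⟩
  obtain ⟨v⟩ := G.2.1.nonempty
  rcases v with a | a
  · exact a.elim0
  · exact a.elim0

lemma sum_finset_card {α : Type*} [Fintype α] [DecidableEq α] (F : ℕ → ℕ) :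
    ∑ A : Finset α, F A.card
      = ∑ i ∈ Finset.range (Fintype.card α + 1), (Fintype.card α).choose i * F i := by
  rw [← Finset.powerset_univ, Finset.sum_powerset]
  refine Finset.sum_congr (by simp) fun i _ => ?_
  have hconst : ∑ t ∈ Finset.powersetCard i (Finset.univ : Finset α), F t.card
      = ∑ _t ∈ Finset.powersetCard i (Finset.univ : Finset α), F i :=
    Finset.sum_congr rfl (fun t ht => by rw [(Finset.mem_powersetCard.mp ht).2])
  rw [hconst, Finset.sum_const, Finset.card_powersetCard, smul_eq_mul, Finset.card_univ]

theorem keyNat (r s : ℕ) :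
    (r + s) * Nbi r s 0 = Nbi r s 0 +
      ∑ i ∈ Finset.range (r+1), ∑ j ∈ Finset.range (s+1),
        r.choose i * s.choose j * (i * Nbi i j 0) * ((s - j) * Nbi (r-i) (s-j) 0) := by
  classical
  -- regroup the subset sums by cardinality
  have hgroup : ∑ A : Finset (Fin r), ∑ B : Finset (Fin s),
      A.card * (s - B.card) * (Nbi A.card B.card 0 * Nbi (r - A.card) (s - B.card) 0)
      = ∑ i ∈ Finset.range (r+1), ∑ j ∈ Finset.range (s+1),
        r.choose i * s.choose j * (i * Nbi i j 0) * ((s - j) * Nbi (r-i) (s-j) 0) := by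
    have step1 : ∀ A : Finset (Fin r), ∑ B : Finset (Fin s),
        A.card * (s - B.card) * (Nbi A.card B.card 0 * Nbi (r - A.card) (s - B.card) 0)
        = ∑ j ∈ Finset.range (s+1), s.choose j *
            (A.card * (s - j) * (Nbi A.card j 0 * Nbi (r - A.card) (s - j) 0)) := by
      intro A
      have := sum_finset_card (α := Fin s)
        (fun j => A.card * (s - j) * (Nbi A.card j 0 * Nbi (r - A.card) (s - j) 0))
      simpa using this
    rw [Finset.sum_congr rfl (fun A _ => step1 A)]
    have step2 := sum_finset_card (α := Fin r)
      (fun i => ∑ j ∈ Finset.range (s+1), s.choose j *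
          (i * (s - j) * (Nbi i j 0 * Nbi (r - i) (s - j) 0)))
    simp only [Fintype.card_fin] at step2
    rw [step2]
    refine Finset.sum_congr rfl fun i _ => ?_
    rw [Finset.mul_sum]
    refine Finset.sum_congr rfl fun j _ => ?_
    ring
  have hchain : (r + s - 1) * Nbi r s 0 = ∑ i ∈ Finset.range (r+1), ∑ j ∈ Finset.range (s+1),
      r.choose i * s.choose j * (i * Nbi i j 0) * ((s - j) * Nbi (r-i) (s-j) 0) := by
    rw [← hgroup, ← card_P'T, ← Nat.card_congr (toggleEquiv r s), card_PT]
  rcases Nat.eq_zero_or_pos (r + s) with h0 | hpos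
  · have hr : r = 0 := by omega
    have hs : s = 0 := by omega
    subst hr; subst hs
    simp [nbi_zero_zero]
  · obtain ⟨t, ht⟩ : ∃ t, r + s = t + 1 := ⟨r + s - 1, by omega⟩
    have ht' : r + s - 1 = t := by omega
    rw [ht, ← hchain, ht']
    ring
end Count
noncomputable def fs (a b : ℕ) : Fin 2 →₀ ℕ := Finsupp.single 0 a + Finsupp.single 1 b

@[simp] lemma fs_apply0 (a b : ℕ) : fs a b 0 = a := by
  simp [fs, Finsupp.single_apply]

@[simp] lemma fs_apply1 (a b : ℕ) : fs a b 1 = b := by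
  simp [fs, Finsupp.single_apply]

lemma finsupp2_ext (g : Fin 2 →₀ ℕ) : g = fs (g 0) (g 1) := by
  refine Finsupp.ext fun a => ?_
  fin_cases a <;> simp

theorem keyE : Tx + Ty = Fk 0 + Tx * Ty := by
  refine MvPowerSeries.ext fun m => ?_
  rw [map_add, map_add, MvPowerSeries.coeff_mul]
  set r := m 0 with hr
  set s := m 1 with hs
  have hsum : ∑ p ∈ Finset.HasAntidiagonal.antidiagonal m, MvPowerSeries.coeff p.1 Tx * MvPowerSeries.coeff p.2 Ty
      = ∑ q ∈ range (r+1) ×ˢ range (s+1),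
          ((q.1 : ℚ) * (Nbi q.1 q.2 0 : ℚ) / ((q.1.factorial : ℚ) * (q.2.factorial : ℚ))) *
          (((s - q.2 : ℕ) : ℚ) * (Nbi (r-q.1) (s-q.2) 0 : ℚ) /
            (((r-q.1).factorial : ℚ) * ((s-q.2).factorial : ℚ))) := by
    refine Finset.sum_nbij' (fun p => (p.1 0, p.1 1)) (fun q => (fs q.1 q.2, fs (r-q.1) (s-q.2)))
      ?_ ?_ ?_ ?_ ?_
    · rintro ⟨p1, p2⟩ hp
      rw [Finset.HasAntidiagonal.mem_antidiagonal] at hp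
      have h0 : p1 0 + p2 0 = r := by rw [hr, ← hp]; rfl
      have h1 : p1 1 + p2 1 = s := by rw [hs, ← hp]; rfl
      simp only [Finset.mem_product, Finset.mem_range]
      omega
    · rintro ⟨a, b⟩ hq
      simp only [Finset.mem_product, Finset.mem_range] at hq
      rw [Finset.HasAntidiagonal.mem_antidiagonal]
      refine Finsupp.ext fun i => ?_
      have ha : a ≤ r := by omega
      have hb : b ≤ s := by omega
      fin_cases i <;> simp [Finsupp.add_apply] <;> omega
    · rintro ⟨p1, p2⟩ hp
      rw [Finset.HasAntidiagonal.mem_antidiagonal] at hp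
      have h0 : p1 0 + p2 0 = r := by rw [hr, ← hp]; rfl
      have h1 : p1 1 + p2 1 = s := by rw [hs, ← hp]; rfl
      have e1 : p1 = fs (p1 0) (p1 1) := finsupp2_ext p1
      have e2 : p2 = fs (r - p1 0) (s - p1 1) := by
        rw [finsupp2_ext p2]
        congr 1 <;> omega
      exact Prod.ext e1.symm e2.symm
    · rintro ⟨a, b⟩ hq
      simp
    · rintro ⟨p1, p2⟩ hp
      rw [Finset.HasAntidiagonal.mem_antidiagonal] at hp
      have h0 : p1 0 + p2 0 = r := by rw [hr, ← hp]; rfl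
      have h1 : p1 1 + p2 1 = s := by rw [hs, ← hp]; rfl
      have e20 : p2 0 = r - p1 0 := by omega
      have e21 : p2 1 = s - p1 1 := by omega
      simp only [MvPowerSeries.coeff_apply, Tx, Ty, e20, e21]
  rw [hsum]
  -- now pure arithmetic from keyNat
  have hkey := keyNat r s
  have hQ : ((r:ℚ) + s) * (Nbi r s 0 : ℚ) = (Nbi r s 0 : ℚ) +
      ∑ q ∈ range (r+1) ×ˢ range (s+1),
        ((r.choose q.1 : ℚ) * (s.choose q.2 : ℚ) * ((q.1 : ℚ) * (Nbi q.1 q.2 0 : ℚ)) *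
          (((s - q.2 : ℕ) : ℚ) * (Nbi (r-q.1) (s-q.2) 0 : ℚ))) := by
    have := congrArg (fun n : ℕ => (n : ℚ)) hkey
    push_cast [Finset.sum_product] at this ⊢
    convert this using 2
  have nz : ∀ n : ℕ, ((n.factorial : ℚ)) ≠ 0 := fun n => Nat.cast_ne_zero.mpr (Nat.factorial_ne_zero n)
  have hterm : ∀ q ∈ range (r+1) ×ˢ range (s+1),
      ((q.1 : ℚ) * (Nbi q.1 q.2 0 : ℚ) / ((q.1.factorial : ℚ) * (q.2.factorial : ℚ))) *
          (((s - q.2 : ℕ) : ℚ) * (Nbi (r-q.1) (s-q.2) 0 : ℚ) /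
            (((r-q.1).factorial : ℚ) * ((s-q.2).factorial : ℚ)))
      = ((r.choose q.1 : ℚ) * (s.choose q.2 : ℚ) * ((q.1 : ℚ) * (Nbi q.1 q.2 0 : ℚ)) *
          (((s - q.2 : ℕ) : ℚ) * (Nbi (r-q.1) (s-q.2) 0 : ℚ))) /
          ((r.factorial : ℚ) * (s.factorial : ℚ)) := by
    rintro ⟨a, b⟩ hq
    simp only [Finset.mem_product, Finset.mem_range] at hq
    have ha : a ≤ r := by omega
    have hb : b ≤ s := by omega
    rw [Nat.cast_choose ℚ ha, Nat.cast_choose ℚ hb]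
    field_simp
  rw [Finset.sum_congr rfl hterm, ← Finset.sum_div]
  simp only [MvPowerSeries.coeff_apply, Tx, Ty, Fk, ← hr, ← hs]
  rw [← add_div, ← add_div, div_eq_div_iff (by positivity) (by positivity)]
  linear_combination ((r.factorial : ℚ) * (s.factorial : ℚ)) * hQ
section Series
open MvPowerSeries

lemma coeff_Dx (f : MvPowerSeries (Fin 2) ℚ) (m : Fin 2 →₀ ℕ) :
    coeff m (Dx f) = (m 0 : ℚ) * coeff m f := rfl

lemma coeff_Dy (f : MvPowerSeries (Fin 2) ℚ) (m : Fin 2 →₀ ℕ) :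
    coeff m (Dy f) = (m 1 : ℚ) * coeff m f := rfl

lemma Dx_add (f g : MvPowerSeries (Fin 2) ℚ) : Dx (f + g) = Dx f + Dx g := by
  ext m; simp [coeff_Dx, mul_add]

lemma Dy_add (f g : MvPowerSeries (Fin 2) ℚ) : Dy (f + g) = Dy f + Dy g := by
  ext m; simp [coeff_Dy, mul_add]

lemma Dx_mul (f g : MvPowerSeries (Fin 2) ℚ) : Dx (f * g) = Dx f * g + f * Dx g := by
  ext m
  rw [coeff_Dx, map_add, coeff_mul, coeff_mul, coeff_mul, mul_sum, ← sum_add_distrib]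
  refine Finset.sum_congr rfl ?_
  rintro ⟨p, q⟩ hpq
  rw [Finset.HasAntidiagonal.mem_antidiagonal] at hpq
  have h0 : (p 0 : ℚ) + q 0 = m 0 := by
    rw [← hpq]; push_cast [Finsupp.add_apply]; ring
  simp only [coeff_Dx]
  linear_combination (-(coeff p f * coeff q g)) * h0

lemma Dy_mul (f g : MvPowerSeries (Fin 2) ℚ) : Dy (f * g) = Dy f * g + f * Dy g := by
  ext m
  rw [coeff_Dy, map_add, coeff_mul, coeff_mul, coeff_mul, mul_sum, ← sum_add_distrib]
  refine Finset.sum_congr rfl ?_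
  rintro ⟨p, q⟩ hpq
  rw [Finset.HasAntidiagonal.mem_antidiagonal] at hpq
  have h0 : (p 1 : ℚ) + q 1 = m 1 := by
    rw [← hpq]; push_cast [Finsupp.add_apply]; ring
  simp only [coeff_Dy]
  linear_combination (-(coeff p f * coeff q g)) * h0

lemma Dx_Fk : Dx (Fk 0) = Tx := by
  ext m; simp [Dx, Fk, Tx, MvPowerSeries.coeff_apply, mul_div_assoc]

lemma Dy_Fk : Dy (Fk 0) = Ty := by
  ext m; simp [Dy, Fk, Ty, MvPowerSeries.coeff_apply, mul_div_assoc]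

lemma hxy : Dx Ty = Dy Tx := by
  ext m
  show (m 0 : ℚ) * _ = (m 1 : ℚ) * _
  simp only [Tx, Ty, MvPowerSeries.coeff_apply]
  ring

/-- `(1-T_y)·(D_x Z) + (1-T_x)·(D_y Z) = Z` and
`(1-T_y)·(D_x W) + (1-T_x)·(D_y W) = 2W`. -/

theorem stmt10 :
    (1 - Ty) * Dx Zs + (1 - Tx) * Dy Zs = Zs ∧
      (1 - Ty) * Dx Ws + (1 - Tx) * Dy Ws = 2 * Ws := by
  have hA1 : Dx Tx + Dx Ty = Tx + (Dx Tx * Ty + Tx * Dx Ty) := by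
    have := congrArg Dx keyE
    rwa [Dx_add, Dx_add, Dx_Fk, Dx_mul] at this
  have hA2 : Dy Tx + Dy Ty = Ty + (Dy Tx * Ty + Tx * Dy Ty) := by
    have := congrArg Dy keyE
    rwa [Dy_add, Dy_add, Dy_Fk, Dy_mul] at this
  have hc : Dx Ty = Dy Tx := hxy
  have hZx : Dx Zs = Dx Tx + Dx Ty := Dx_add _ _
  have hZy : Dy Zs = Dy Tx + Dy Ty := Dy_add _ _
  have hWx : Dx Ws = Dx Tx * Ty + Tx * Dx Ty := Dx_mul _ _
  have hWy : Dy Ws = Dy Tx * Ty + Tx * Dy Ty := Dy_mul _ _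
  constructor
  · rw [hZx, hZy]
    show _ = Tx + Ty
    linear_combination hA1 + hA2 + (Tx - Ty) * hc
  · rw [hWx, hWy]
    show _ = 2 * (Tx * Ty)
    linear_combination Ty * hA1 + Tx * hA2 + (Tx - Ty) * hc
end Series
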